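/- Let H be a finite-dimensional Hilbert space with basis {k_i}, Gram matrix K, dual basis {f_i}, and Ω(Σ α_i k_i) = Σ conj(α_i) f_i. Then Ω is an involution (Ω∘Ω = id) if and only if conj(Θ)·Θ = I where Θ = K^{-1}; equivalently, since Θ = K^{-1} is self-adjoint, Ω is an involution iff K is orthogonal. -/

import Mathlib

open Finset Matrix

/-- Let `{k_i}` be a basis of a finite-dimensional complex Hilbert space with Gram matrix
`K`, dual basis `{f_i}`, and let `Ω` be the conjugate-linear map with
`Ω(Σ α_i k_i) = Σ conj(α_i) f_i`.  Then `Ω` is an involution (`Ω∘Ω = id`) iff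
`conj(Θ)·Θ = I` where `Θ = K⁻¹`; equivalently, iff `K` is orthogonal:
`conj(K)·K = I`. -/
theorem conjugation_involution_iff_orthogonal {n : ℕ} {H : Type*} [NormedAddCommGroup H]
    [InnerProductSpace ℂ H] (b : Module.Basis (Fin n) ℂ H) (f : Fin n → H)
    (hdual : ∀ i j, (inner ℂ (f j) (b i) : ℂ) = if i = j then 1 else 0)
    (K : Matrix (Fin n) (Fin n) ℂ)
    (hK : ∀ i j, K i j = (inner ℂ (b j) (b i) : ℂ))
    (Ω : H → H)
    (hΩ : ∀ h : H, Ω h = ∑ i, (starRingEnd ℂ) (b.repr h i) • f i) :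
    ((∀ h : H, Ω (Ω h) = h) ↔ (K⁻¹).map (starRingEnd ℂ) * K⁻¹ = 1) ∧
      ((∀ h : H, Ω (Ω h) = h) ↔ K.map (starRingEnd ℂ) * K = 1) := by
  set c := starRingEnd ℂ with hc
  -- the coordinate matrix of the dual vectors
  set C : Matrix (Fin n) (Fin n) ℂ := Matrix.of fun i j => b.repr (f i) j with hCdef
  have hCapp : ∀ i j, C i j = b.repr (f i) j := fun i j => rfl
  -- duality gives `K * Cᴴ = 1`
  have hKC : K * Cᴴ = 1 := by
    ext i j
    have h1 := hdual i j
    conv_lhs at h1 => rw [← b.sum_repr (f j)]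
    rw [sum_inner] at h1
    simp only [inner_smul_left] at h1
    rw [Matrix.mul_apply, Matrix.one_apply]
    rw [← h1]
    apply Finset.sum_congr rfl
    intro m _
    rw [hK, Matrix.conjTranspose_apply, hCapp]
    simp [mul_comm]
  -- K is Hermitian
  have hKH : Kᴴ = K := by
    ext i j
    rw [Matrix.conjTranspose_apply, hK, hK]
    exact inner_conj_symm _ _
  have hdet : IsUnit K.det := Matrix.isUnit_det_of_right_inverse hKC
  have hinvK : K⁻¹ = Cᴴ := Matrix.inv_eq_right_inv hKC
  have hCK : C = K⁻¹ := by
    have : (K⁻¹)ᴴ = K⁻¹ := by rw [Matrix.conjTranspose_nonsing_inv, hKH]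
    rw [← this, hinvK, Matrix.conjTranspose_conjTranspose]
  have hmulinv : K * K⁻¹ = 1 := Matrix.mul_nonsing_inv K hdet
  have hinvmul : K⁻¹ * K = 1 := Matrix.nonsing_inv_mul K hdet
  -- coordinates of Ω x
  have hrepr : ∀ (x : H) (l : Fin n), b.repr (Ω x) l = ∑ m, c (b.repr x m) * C m l := by
    intro x l
    rw [hΩ x, map_sum, Finsupp.finset_sum_apply]
    apply Finset.sum_congr rfl
    intro m _
    rw [_root_.map_smul, Finsupp.smul_apply, smul_eq_mul, hCapp]
  -- coordinates of Ω (Ω x)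
  have hΩΩ : ∀ (x : H) (l : Fin n),
      b.repr (Ω (Ω x)) l = ∑ i, b.repr x i * (C.map c * C) i l := by
    intro x l
    rw [hrepr]
    have : ∀ m, c (b.repr (Ω x) m) * C m l
        = ∑ i, b.repr x i * (c (C i m) * C m l) := by
      intro m
      rw [hrepr, map_sum, Finset.sum_mul]
      apply Finset.sum_congr rfl
      intro i _
      rw [_root_.map_mul, hc, Complex.conj_conj]
      ring
    rw [Finset.sum_congr rfl fun m _ => this m, Finset.sum_comm]
    apply Finset.sum_congr rfl
    intro i _
    rw [Matrix.mul_apply, Finset.mul_sum]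
    apply Finset.sum_congr rfl
    intro m _
    rw [Matrix.map_apply]
  -- the main equivalence
  have hmain : (∀ h : H, Ω (Ω h) = h) ↔ C.map c * C = 1 := by
    constructor
    · intro hinv
      ext i l
      have h1 := congrArg (fun x => (b.repr x) l) (hinv (b i))
      rw [hΩΩ] at h1
      simp only [Module.Basis.repr_self, Finsupp.single_apply] at h1
      rw [Matrix.one_apply, ← h1]
      simp [ite_mul]
    · intro hM x
      apply b.repr.injective
      ext l
      rw [hΩΩ, hM]
      simp [Matrix.one_apply]
  have hCC : C.map c * C = (K⁻¹).map c * K⁻¹ := by rw [hCK]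
  constructor
  · rw [hmain, hCC]
  · rw [hmain, hCC]
    constructor
    · intro h1
      calc K.map c * K = K.map c * ((K⁻¹).map c * K⁻¹) * K := by rw [h1, mul_one]
        _ = (K.map c * (K⁻¹).map c) * (K⁻¹ * K) := by simp only [Matrix.mul_assoc]
        _ = (K * K⁻¹).map c * (K⁻¹ * K) := by rw [Matrix.map_mul]
        _ = 1 := by rw [hmulinv, hinvmul, Matrix.map_one c (map_zero c) (map_one c), mul_one]
    · intro h1
      calc (K⁻¹).map c * K⁻¹ = (K⁻¹).map c * (K.map c * K) * K⁻¹ := by rw [h1, mul_one]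
        _ = ((K⁻¹).map c * K.map c) * (K * K⁻¹) := by simp only [Matrix.mul_assoc]
        _ = (K⁻¹ * K).map c * (K * K⁻¹) := by rw [Matrix.map_mul]
        _ = 1 := by rw [hmulinv, hinvmul, Matrix.map_one c (map_zero c) (map_one c), mul_one]
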